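/- In the line model: let c₁ < c₂ be real numbers and (V₁, V₂) = Π(c₁, c₂). If E_L(c₁) = ε(c₁, V₁), E_R(c₂) = ε(c₂, V₂), and ε(c₁, V₁) = ε(c₂, V₂), then both E_L and E_R are continuous on the closed interval [c₁, c₂]. -/

import Mathlib

open Finset

private lemma fold_cont {I : Type*} (s : Finset I) (g : I → ℝ → ℝ)
    (hg : ∀ i, Continuous (g i)) :
    Continuous (fun x => s.fold max (0:ℝ) (fun i => g i x)) := by
  classical
  induction s using Finset.induction with
  | empty => simpa using continuous_const
  | insert _ _ hi ih =>
    simp only [Finset.fold_insert hi]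
    exact (hg _).max ih

open scoped Classical in
/-- In the line model, under the stated balance conditions on the 2-center
`(c₁, c₂)`, the envelopes `E_L` and `E_R` are continuous on `[c₁, c₂]`. -/
theorem envelopes_continuous_on_line
    {I : Type*} [Fintype I] [Nonempty I]
    (w : I → ℝ) (hw : ∀ i, 0 < w i) (a h : I → ℝ) (hh : ∀ i, 0 ≤ h i)
    (f : I → ℝ → ℝ) (hf : ∀ i x, f i x = w i * (|x - a i| + h i))
    (εU : ℝ → Finset I → ℝ)
    (hεU : ∀ x U, εU x U = U.fold max 0 (fun i => f i x))
    (EL ER : ℝ → ℝ)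
    (hEL : ∀ x, EL x = (univ.filter (fun i => a i ≤ x)).fold max 0 (fun i => f i x))
    (hER : ∀ x, ER x = (univ.filter (fun i => x ≤ a i)).fold max 0 (fun i => f i x))
    (c₁ c₂ : ℝ) (hc : c₁ < c₂)
    (V₁ : Finset I)
    (hV₁ : V₁ = univ.filter (fun i => |c₁ - a i| + h i ≤ |c₂ - a i| + h i))
    (hL : EL c₁ = εU c₁ V₁)
    (hR : ER c₂ = εU c₂ (univ \ V₁))
    (hbal : εU c₁ V₁ = εU c₂ (univ \ V₁)) :
    ContinuousOn EL (Set.Icc c₁ c₂) ∧ ContinuousOn ER (Set.Icc c₁ c₂) := by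
  -- basic fold facts
  have zero_le_fold : ∀ (s : Finset I) (g : I → ℝ), (0:ℝ) ≤ s.fold max 0 g := by
    intro s g
    exact (Finset.le_fold_max _).mpr (Or.inl le_rfl)
  have mem_le_fold : ∀ (s : Finset I) (g : I → ℝ) i, i ∈ s → g i ≤ s.fold max 0 g := by
    intro s g i hi
    exact (Finset.le_fold_max _).mpr (Or.inr ⟨i, hi, le_rfl⟩)
  -- members of V₁ have f i c₁ ≤ εU c₁ V₁
  have hV₁le : ∀ i ∈ V₁, f i c₁ ≤ εU c₁ V₁ := by
    intro i hi
    rw [hεU]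
    exact mem_le_fold V₁ (fun j => f j c₁) i hi
  -- members outside V₁ have f i c₂ ≤ εU c₁ V₁
  have hV₂le : ∀ i, i ∉ V₁ → f i c₂ ≤ εU c₁ V₁ := by
    intro i hi
    rw [hbal, hεU]
    exact mem_le_fold _ (fun j => f j c₂) i (Finset.mem_sdiff.mpr ⟨Finset.mem_univ i, hi⟩)
  -- membership characterization
  have hV₁mem : ∀ i, i ∈ V₁ ↔ |c₁ - a i| + h i ≤ |c₂ - a i| + h i := by
    intro i
    rw [hV₁, Finset.mem_filter]
    simp
  -- monotonicity of EL
  have hELmono : ∀ x y : ℝ, x ≤ y → EL x ≤ EL y := by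
    intro x y hxy
    rw [hEL, hEL]
    refine (Finset.fold_max_le _).mpr ⟨zero_le_fold _ _, ?_⟩
    intro i hi
    rw [Finset.mem_filter] at hi
    have hax : a i ≤ x := hi.2
    have h1 : f i x ≤ f i y := by
      rw [hf, hf]
      apply mul_le_mul_of_nonneg_left _ (hw i).le
      have : |x - a i| = x - a i := abs_of_nonneg (by linarith)
      have h2 : |y - a i| = y - a i := abs_of_nonneg (by linarith)
      rw [this, h2]; linarith
    refine le_trans h1 ?_
    exact mem_le_fold _ (fun j => f j y) i (Finset.mem_filter.mpr ⟨Finset.mem_univ i, show a i ≤ y by linarith⟩)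
  -- antitonicity of ER
  have hERanti : ∀ x y : ℝ, x ≤ y → ER y ≤ ER x := by
    intro x y hxy
    rw [hER, hER]
    refine (Finset.fold_max_le _).mpr ⟨zero_le_fold _ _, ?_⟩
    intro i hi
    rw [Finset.mem_filter] at hi
    have hay : y ≤ a i := hi.2
    have h1 : f i y ≤ f i x := by
      rw [hf, hf]
      apply mul_le_mul_of_nonneg_left _ (hw i).le
      have : |y - a i| = a i - y := by rw [abs_sub_comm]; exact abs_of_nonneg (by linarith)
      have h2 : |x - a i| = a i - x := by rw [abs_sub_comm]; exact abs_of_nonneg (by linarith)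
      rw [this, h2]; linarith
    refine le_trans h1 ?_
    exact mem_le_fold _ (fun j => f j x) i (Finset.mem_filter.mpr ⟨Finset.mem_univ i, show x ≤ a i by linarith⟩)
  -- the continuous candidates
  set F : ℝ → ℝ := fun x => max (εU c₁ V₁) (Finset.univ.fold max 0 (fun i => w i * (x - a i + h i)))
    with hF
  set G : ℝ → ℝ := fun x => max (εU c₁ V₁) (Finset.univ.fold max 0 (fun i => w i * (a i - x + h i)))
    with hG
  have hFc : Continuous F := by
    apply continuous_const.max
    exact fold_cont _ _ (fun i => continuous_const.mul ((continuous_id.sub continuous_const).add continuous_const))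
  have hGc : Continuous G := by
    apply continuous_const.max
    exact fold_cont _ _ (fun i => continuous_const.mul ((continuous_const.sub continuous_id).add continuous_const))
  -- EL = F on Icc
  have hELF : Set.EqOn EL F (Set.Icc c₁ c₂) := by
    intro x hx
    obtain ⟨hx1, hx2⟩ := hx
    apply le_antisymm
    · rw [hEL]
      refine (Finset.fold_max_le _).mpr ⟨le_trans (zero_le_fold _ _) (le_max_right _ _), ?_⟩
      intro i hi
      rw [Finset.mem_filter] at hi
      have hax : a i ≤ x := hi.2
      have : f i x = w i * (x - a i + h i) := by
        rw [hf, abs_of_nonneg (by linarith : (0:ℝ) ≤ x - a i)]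
      rw [this]
      exact le_trans (mem_le_fold univ (fun j => w j * (x - a j + h j)) i (Finset.mem_univ i)) (le_max_right _ _)
    · apply max_le
      · rw [← hL]; exact hELmono c₁ x hx1
      · refine (Finset.fold_max_le _).mpr ⟨by rw [hEL]; exact zero_le_fold _ _, ?_⟩
        intro i _
        by_cases hax : a i ≤ x
        · have : w i * (x - a i + h i) = f i x := by
            rw [hf, abs_of_nonneg (by linarith : (0:ℝ) ≤ x - a i)]
          rw [this, hEL]
          exact mem_le_fold _ (fun j => f j x) i (Finset.mem_filter.mpr ⟨Finset.mem_univ i, show a i ≤ x from hax⟩)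
        · push_neg at hax
          have hrle : εU c₁ V₁ ≤ EL x := by rw [← hL]; exact hELmono c₁ x hx1
          refine le_trans ?_ hrle
          by_cases hiV : i ∈ V₁
          · refine le_trans ?_ (hV₁le i hiV)
            rw [hf]
            apply mul_le_mul_of_nonneg_left _ (hw i).le
            have : (0:ℝ) ≤ |c₁ - a i| := abs_nonneg _
            linarith
          · refine le_trans ?_ (hV₂le i hiV)
            rw [hf]
            apply mul_le_mul_of_nonneg_left _ (hw i).le
            have : c₂ - a i ≤ |c₂ - a i| := le_abs_self _
            linarith
  -- ER = G on Icc
  have hERG : Set.EqOn ER G (Set.Icc c₁ c₂) := by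
    intro x hx
    obtain ⟨hx1, hx2⟩ := hx
    apply le_antisymm
    · rw [hER]
      refine (Finset.fold_max_le _).mpr ⟨le_trans (zero_le_fold _ _) (le_max_right _ _), ?_⟩
      intro i hi
      rw [Finset.mem_filter] at hi
      have hax : x ≤ a i := hi.2
      have : f i x = w i * (a i - x + h i) := by
        rw [hf, abs_sub_comm, abs_of_nonneg (by linarith : (0:ℝ) ≤ a i - x)]
      rw [this]
      exact le_trans (mem_le_fold univ (fun j => w j * (a j - x + h j)) i (Finset.mem_univ i)) (le_max_right _ _)
    · apply max_le
      · rw [hbal, ← hR]; exact hERanti x c₂ hx2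
      · refine (Finset.fold_max_le _).mpr ⟨by rw [hER]; exact zero_le_fold _ _, ?_⟩
        intro i _
        by_cases hax : x ≤ a i
        · have : w i * (a i - x + h i) = f i x := by
            rw [hf, abs_sub_comm, abs_of_nonneg (by linarith : (0:ℝ) ≤ a i - x)]
          rw [this, hER]
          exact mem_le_fold _ (fun j => f j x) i (Finset.mem_filter.mpr ⟨Finset.mem_univ i, show x ≤ a i from hax⟩)
        · push_neg at hax
          have hrle : εU c₁ V₁ ≤ ER x := by rw [hbal, ← hR]; exact hERanti x c₂ hx2
          refine le_trans ?_ hrle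
          by_cases hiV : i ∈ V₁
          · refine le_trans ?_ (hV₁le i hiV)
            rw [hf]
            apply mul_le_mul_of_nonneg_left _ (hw i).le
            have : a i - c₁ ≤ |c₁ - a i| := by rw [abs_sub_comm]; exact le_abs_self _
            linarith
          · refine le_trans ?_ (hV₂le i hiV)
            rw [hf]
            apply mul_le_mul_of_nonneg_left _ (hw i).le
            have : (0:ℝ) ≤ |c₂ - a i| := abs_nonneg _
            linarith
  exact ⟨hFc.continuousOn.congr hELF, hGc.continuousOn.congr hERG⟩
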